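/- Let T be a firm non-expansive mapping of a metric space (X,δ) into itself, and suppose h is a metric functional that arises as a pointwise limit of h_{T^{n_i}x₀} along a subsequence n_i → ∞. Then for every x ∈ X, h(Tx) ≤ h(x) + ρ(T), where ρ(T) is the linear rate of escape. -/
import Mathlib

open Filter Topology

def IsWeakMetric {X : Type*} (δ : X → X → ℝ) : Prop :=
  (∀ x, δ x x = 0) ∧ (∀ x y, 0 ≤ δ x y) ∧ (∀ x y z, δ x z ≤ δ x y + δ y z)

def IsNonexpansive {X : Type*} (δ : X → X → ℝ) (T : X → X) : Prop :=
  ∀ x y, δ (T x) (T y) ≤ δ x y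

def IsFirm {X : Type*} (δ : X → X → ℝ) (T : X → X) : Prop :=
  ∃ q r s t : X → X → ℝ,
    (∀ x y, 0 ≤ q x y) ∧ (∀ x y, 0 ≤ r x y) ∧ (∀ x y, 0 ≤ s x y) ∧ (∀ x y, 0 ≤ t x y) ∧
    (∃ α > 0, ∀ x y, α ≤ t x y) ∧
    (∀ x y, q x y + r x y + s x y + 2 * t x y ≤ 1) ∧
    (∀ x y, δ (T x) (T y) ≤ q x y * δ x y + r x y * δ x (T x) + s x y * δ y (T y)
      + t x y * (δ x (T y) + δ (T x) y))

theorem stmt19 {X : Type*} [MetricSpace X] (x₀ : X) (T : X → X)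
    (hT : IsNonexpansive (fun x y : X => dist x y) T)
    (hF : IsFirm (fun x y : X => dist x y) T)
    (ρ : ℝ)
    (hρ : Tendsto (fun n : ℕ => dist x₀ (T^[n] x₀) / n) atTop (nhds ρ))
    (h : X → ℝ) (n : ℕ → ℕ) (hn : StrictMono n)
    (hlim : ∀ x : X, Tendsto
      (fun i : ℕ => dist x (T^[n i] x₀) - dist x₀ (T^[n i] x₀)) atTop (nhds (h x))) :
    ∀ x : X, h (T x) ≤ h x + ρ := by
  classical
  have hTne : ∀ u v : X, dist (T u) (T v) ≤ dist u v := hT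
  set xq : ℕ → X := fun k => T^[k] x₀ with hxqdef
  have hxqsucc : ∀ k, xq (k + 1) = T (xq k) := fun k => Function.iterate_succ_apply' T k x₀
  set a : ℕ → ℝ := fun k => dist (xq k) (xq (k + 1)) with hadef
  have haanti : Antitone a := by
    apply antitone_nat_of_succ_le
    intro k
    simp only [hadef]
    rw [hxqsucc (k + 1), hxqsucc k]
    exact hTne (xq k) (T (xq k))
  have haBdd : BddBelow (Set.range a) := ⟨0, by rintro _ ⟨k, rfl⟩; exact dist_nonneg⟩
  set L : ℝ := ⨅ k, a k with hLdef
  have hLtend : Tendsto a atTop (𝓝 L) := tendsto_atTop_ciInf haanti haBdd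
  have hL0 : 0 ≤ L := le_ciInf fun k => dist_nonneg
  set D : ℕ → ℕ → ℝ := fun m k => dist (xq k) (xq (k + m)) with hDdef
  have hDanti : ∀ m, Antitone (D m) := by
    intro m
    apply antitone_nat_of_succ_le
    intro k
    simp only [hDdef]
    rw [show k + 1 + m = (k + m) + 1 by omega, hxqsucc (k + m), hxqsucc k]
    exact hTne _ _
  have hDBdd : ∀ m, BddBelow (Set.range (D m)) :=
    fun m => ⟨0, by rintro _ ⟨k, rfl⟩; exact dist_nonneg⟩
  set B : ℕ → ℝ := fun m => ⨅ k, D m k with hBdef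
  have hBtend : ∀ m, Tendsto (D m) atTop (𝓝 (B m)) :=
    fun m => tendsto_atTop_ciInf (hDanti m) (hDBdd m)
  have hBle : ∀ m k, B m ≤ D m k := by
    intro m k
    simp only [hBdef]
    exact ciInf_le (hDBdd m) k
  have hB0 : ∀ m, 0 ≤ B m := by
    intro m
    simp only [hBdef]
    exact le_ciInf fun k => dist_nonneg
  -- subadditivity : D m k ≤ m * a k
  have hDsub : ∀ m k, D m k ≤ (m : ℝ) * a k := by
    intro m
    induction m with
    | zero => intro k; simp [hDdef]
    | succ m ih =>
      intro k
      have tri : D (m + 1) k ≤ D m k + a (k + m) := by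
        simp only [hDdef, hadef]
        rw [show k + (m + 1) = (k + m) + 1 by omega]
        exact dist_triangle _ (xq (k + m)) _
      have h2 : a (k + m) ≤ a k := haanti (Nat.le_add_right k m)
      have := ih k
      push_cast
      linarith
  have hBsub : ∀ m, B m ≤ (m : ℝ) * L := by
    intro m
    refine ge_of_tendsto' (hLtend.const_mul (m : ℝ)) fun k => ?_
    exact (hBle m k).trans (hDsub m k)
  -- firmness data
  obtain ⟨q, r, s, t, hq0, hr0, hs0, ht0, ⟨α, hα, hαt⟩, hsum, hfirm⟩ := hF
  -- key induction step
  have hkey : ∀ m : ℕ, ((m : ℝ) + 1) * L ≤ B (m + 1) → ((m : ℝ) + 2) * L ≤ B (m + 2) := by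
    intro m hBm1
    have hBM : B (m + 1) = ((m : ℝ) + 1) * L := by
      refine le_antisymm ?_ hBm1
      have := hBsub (m + 1); push_cast at this; linarith
    refine le_of_forall_pos_le_add fun ε hε => ?_
    set ε' : ℝ := ε * α with hε'def
    have hε'0 : 0 < ε' := mul_pos hε hα
    -- eventual bounds
    have ev1 : ∀ᶠ k in atTop, D (m + 1) k ≤ ((m : ℝ) + 1) * L + ε' := by
      have := (hBtend (m + 1)).eventually (eventually_le_nhds (lt_add_of_pos_right _ hε'0))
      filter_upwards [this] with k hk
      rw [hBM] at hk; exact hk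
    have ev2 : ∀ᶠ k in atTop, a k ≤ L + ε' :=
      hLtend.eventually (eventually_le_nhds (lt_add_of_pos_right _ hε'0))
    have ev3 : ∀ᶠ k in atTop, D m k ≤ (m : ℝ) * L + ε' := by
      have := (hBtend m).eventually (eventually_le_nhds (lt_add_of_pos_right _ hε'0))
      filter_upwards [this] with k hk
      exact hk.trans (by linarith [hBsub m])
    -- main pointwise estimate
    have main : ∀ᶠ k in atTop, ((m : ℝ) + 2) * L - ε ≤ D (m + 2) k := by
      filter_upwards [ev1, ev2, ev3] with k h1 h2 h3
      have hfk := hfirm (xq k) (xq (k + (m + 1)))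
      simp only at hfk
      rw [← hxqsucc k, ← hxqsucc (k + (m + 1))] at hfk
      -- identify distances
      have E1 : dist (xq (k + 1)) (xq (k + (m + 1) + 1)) = D (m + 1) (k + 1) := by
        simp only [hDdef]
        rw [show k + (m + 1) + 1 = k + 1 + (m + 1) by omega]
      have E2 : dist (xq k) (xq (k + (m + 1))) = D (m + 1) k := by
        simp only [hDdef]
      have E3 : dist (xq k) (xq (k + 1)) = a k := by
        simp only [hadef]
      have E4 : dist (xq (k + (m + 1))) (xq (k + (m + 1) + 1)) = a (k + (m + 1)) := by
        simp only [hadef]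
      have E5 : dist (xq k) (xq (k + (m + 1) + 1)) = D (m + 2) k := by
        simp only [hDdef]
        rw [show k + (m + 1) + 1 = k + (m + 2) by omega]
      have E6 : dist (xq (k + 1)) (xq (k + (m + 1))) = D m (k + 1) := by
        simp only [hDdef]
        rw [show k + (m + 1) = k + 1 + m by omega]
      rw [E1, E2, E3, E4, E5, E6] at hfk
      set Q := q (xq k) (xq (k + (m + 1))) with hQdef
      set R := r (xq k) (xq (k + (m + 1))) with hRdef
      set S := s (xq k) (xq (k + (m + 1))) with hSdef
      set Tc := t (xq k) (xq (k + (m + 1))) with hTcdef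
      have hQ0 : 0 ≤ Q := hq0 _ _
      have hR0 : 0 ≤ R := hr0 _ _
      have hS0 : 0 ≤ S := hs0 _ _
      have hTα : α ≤ Tc := hαt _ _
      have hT0 : 0 ≤ Tc := hα.le.trans hTα
      have hSum : Q + R + S + 2 * Tc ≤ 1 := hsum _ _
      -- bounds
      have e1 : ((m : ℝ) + 1) * L ≤ D (m + 1) (k + 1) := by
        have := hBle (m + 1) (k + 1); rw [hBM] at this; exact this
      have h2' : a (k + (m + 1)) ≤ L + ε' := (haanti (Nat.le_add_right k (m + 1))).trans h2
      have h4 : D m (k + 1) ≤ (m : ℝ) * L + ε' := (hDanti m (Nat.le_succ k)).trans h3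
      have hML0 : 0 ≤ ((m : ℝ) + 1) * L :=
        mul_nonneg (by positivity) hL0
      -- products
      have p1 : Q * D (m + 1) k ≤ Q * (((m : ℝ) + 1) * L + ε') :=
        mul_le_mul_of_nonneg_left h1 hQ0
      have p2 : R * a k ≤ R * (L + ε') := mul_le_mul_of_nonneg_left h2 hR0
      have p3 : S * a (k + (m + 1)) ≤ S * (L + ε') := mul_le_mul_of_nonneg_left h2' hS0
      have p4 : Tc * D m (k + 1) ≤ Tc * ((m : ℝ) * L + ε') := mul_le_mul_of_nonneg_left h4 hT0
      have p5 : Q * (((m : ℝ) + 1) * L) ≤ (1 - R - S - 2 * Tc) * (((m : ℝ) + 1) * L) :=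
        mul_le_mul_of_nonneg_right (by linarith) hML0
      have p6 : 0 ≤ R * ((m : ℝ) * L) := mul_nonneg hR0 (mul_nonneg (by positivity) hL0)
      have p7 : 0 ≤ S * ((m : ℝ) * L) := mul_nonneg hS0 (mul_nonneg (by positivity) hL0)
      have p8 : (Q + R + S + Tc) * ε' ≤ 1 * ε' :=
        mul_le_mul_of_nonneg_right (by linarith) hε'0.le
      -- combine linearly
      have key : Tc * (((m : ℝ) + 2) * L) - ε' ≤ Tc * D (m + 2) k := by
        linarith [hfk, e1, p1, p2, p3, p4, p5, p6, p7, p8]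
      -- divide by Tc ≥ α
      rcases le_or_gt (((m : ℝ) + 2) * L) (D (m + 2) k) with hc | hc
      · linarith
      · have h9 : α * (((m : ℝ) + 2) * L - D (m + 2) k) ≤ Tc * (((m : ℝ) + 2) * L - D (m + 2) k) :=
          mul_le_mul_of_nonneg_right hTα (by linarith)
        have h10 : (((m : ℝ) + 2) * L - D (m + 2) k) * α ≤ ε * α := by linarith [h9, key]
        have h11 : ((m : ℝ) + 2) * L - D (m + 2) k ≤ ε := le_of_mul_le_mul_right h10 hα
        linarith
    have := ge_of_tendsto (hBtend (m + 2)) main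
    linarith
  -- B m ≥ m L for all m
  have hBlow : ∀ m : ℕ, (m : ℝ) * L ≤ B m := by
    have H : ∀ m : ℕ, ((m : ℝ) + 1) * L ≤ B (m + 1) := by
      intro m
      induction m with
      | zero =>
        have hB1 : B 1 = L := by
          simp only [hBdef, hLdef, hDdef, hadef]
        rw [hB1]; norm_num
      | succ m ih =>
        have hk := hkey m ih
        have e : m + 1 + 1 = m + 2 := rfl
        rw [e]
        push_cast
        push_cast at hk
        linarith
    intro m
    cases m with
    | zero => simpa using hB0 0
    | succ m =>
      have := H m
      push_cast
      push_cast at this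
      linarith
  -- L ≤ ρ
  have hLρ : L ≤ ρ := by
    refine ge_of_tendsto hρ ?_
    filter_upwards [eventually_ge_atTop 1] with m hm
    have hd : (m : ℝ) * L ≤ dist x₀ (T^[m] x₀) := by
      have h1 := (hBlow m).trans (hBle m 0)
      have h2 : D m 0 = dist x₀ (T^[m] x₀) := by
        simp only [hDdef, hxqdef]
        rw [zero_add]
        simp
      rw [h2] at h1; exact h1
    have hm0 : (0 : ℝ) < m := by exact_mod_cast hm
    rw [le_div_iff₀ hm0]
    linarith
  -- final argument
  intro x
  have hni : ∀ i : ℕ, i ≤ n i := fun i => hn.le_apply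
  have hcomp : Tendsto (fun i => a (n i - 1)) atTop (𝓝 L) := by
    refine hLtend.comp ?_
    refine tendsto_atTop_atTop.mpr fun b => ⟨b + 1, fun i hi => ?_⟩
    have := hni i
    omega
  have hev : ∀ᶠ i in atTop,
      dist (T x) (T^[n i] x₀) - dist x₀ (T^[n i] x₀) ≤
      (dist x (T^[n i] x₀) - dist x₀ (T^[n i] x₀)) + a (n i - 1) := by
    filter_upwards [eventually_ge_atTop 1] with i hi
    have hk1 : 1 ≤ n i := le_trans hi (hni i)
    have e0 : T^[n i] x₀ = xq (n i) := by rw [hxqdef]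
    rw [e0]
    have hxk : xq (n i) = T (xq (n i - 1)) := by
      rw [← hxqsucc (n i - 1)]
      congr 1
      omega
    have hTxk : dist (T x) (xq (n i)) ≤ dist x (xq (n i - 1)) := by
      rw [hxk]; exact hTne x (xq (n i - 1))
    have htri : dist x (xq (n i - 1)) ≤ dist x (xq (n i)) + a (n i - 1) := by
      have hA : dist x (xq (n i - 1)) ≤ dist x (xq (n i)) + dist (xq (n i)) (xq (n i - 1)) :=
        dist_triangle _ _ _
      have hB' : dist (xq (n i)) (xq (n i - 1)) = a (n i - 1) := by
        rw [dist_comm]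
        simp only [hadef]
        rw [show n i - 1 + 1 = n i by omega]
      linarith
    linarith
  have hfin : h (T x) ≤ h x + L :=
    le_of_tendsto_of_tendsto (hlim (T x)) ((hlim x).add hcomp) hev
  linarith
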